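/- Let (G,∘) and (N,·) be finite groups of the same order. Let e(G,N) be the number of group operations ⋆ on G such that (G,⋆,∘) is a skew brace with (G,⋆) isomorphic to (N,·) as groups, and let f(G,N) be the number of group operations ∘' on N such that (N,·,∘') is a skew brace with (N,∘') isomorphic to (G,∘) as groups. Then |Aut(N,·)| · e(G,N) = |Aut(G,∘)| · f(G,N). -/

import Mathlib

def IsSkewBrace {G : Type*} (dot circ : Group G) : Prop :=
  ∀ σ τ κ : G,
    circ.mul σ (dot.mul τ κ) =
      dot.mul (dot.mul (circ.mul σ τ) (dot.inv σ)) (circ.mul σ κ)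

def gammaFun {G : Type*} (dot circ : Group G) (σ τ : G) : G :=
  dot.mul (dot.inv σ) (circ.mul σ τ)

def IsSubgroupOf {G : Type*} (S : Group G) (H : Set G) : Prop :=
  S.one ∈ H ∧ (∀ a ∈ H, ∀ b ∈ H, S.mul a b ∈ H) ∧ (∀ a ∈ H, S.inv a ∈ H)

def IsLeftIdeal {G : Type*} (dot circ : Group G) (H : Set G) : Prop :=
  IsSubgroupOf dot H ∧ ∀ σ : G, ∀ τ ∈ H, gammaFun dot circ σ τ ∈ H

def IsStrongLeftIdeal {G : Type*} (dot circ : Group G) (H : Set G) : Prop :=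
  IsLeftIdeal dot circ H ∧
    ∀ σ : G, ∀ τ ∈ H, dot.mul (dot.mul σ τ) (dot.inv σ) ∈ H

def IsCharacteristicSubgroupOf {G : Type*} (S : Group G) (H : Set G) : Prop :=
  IsSubgroupOf S H ∧
    ∀ f : G ≃ G, (∀ a b : G, f (S.mul a b) = S.mul (f a) (f b)) → ∀ a ∈ H, f a ∈ H

def oppGroup {G : Type*} (dot : Group G) : Group G :=
  letI := dot
  { mul := fun a b => b * a
    one := (1 : G)
    inv := fun a => a⁻¹
    div := fun a b => b⁻¹ * a
    div_eq_mul_inv := fun _ _ => rfl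
    npow := fun n x => @npowRec G ⟨(1 : G)⟩ ⟨fun a b => b * a⟩ n x
    zpow := fun n x => @zpowRec G ⟨(1 : G)⟩ ⟨fun a b => b * a⟩ ⟨fun a => a⁻¹⟩
      (@npowRec G ⟨(1 : G)⟩ ⟨fun a b => b * a⟩) n x
    mul_assoc := fun a b c => (mul_assoc c b a).symm
    one_mul := fun a => mul_one a
    mul_one := fun a => one_mul a
    inv_mul_cancel := fun a => mul_inv_cancel a }

def lam {G : Type*} (S : Group G) (σ : G) : Equiv.Perm G :=
  letI := S; Equiv.mulLeft σ

def rho {G : Type*} (S : Group G) (σ : G) : Equiv.Perm G :=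
  letI := S; Equiv.mulRight σ⁻¹

namespace Byott

def pullGroup {G N : Type*} (dot : Group N) (f : G ≃ N) : Group G :=
  letI := dot; f.group

theorem pull_mul {G N : Type*} (dot : Group N) (f : G ≃ N) (a b : G) :
    (pullGroup dot f).mul a b = f.symm (dot.mul (f a) (f b)) := rfl

theorem pull_inv {G N : Type*} (dot : Group N) (f : G ≃ N) (a : G) :
    (pullGroup dot f).inv a = f.symm (dot.inv (f a)) := rfl

/-- the inverse of an isomorphism is an isomorphism -/
theorem iso_symm {G N : Type*} {S : Group G} {T : Group N} {f : G ≃ N}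
    (hf : ∀ a b, f (S.mul a b) = T.mul (f a) (f b)) (a b : N) :
    f.symm (T.mul a b) = S.mul (f.symm a) (f.symm b) := by
  apply f.injective
  simp [hf]

theorem pull_eq {G N : Type*} {S : Group G} {dot : Group N} {f : G ≃ N}
    (hf : ∀ a b, f (S.mul a b) = dot.mul (f a) (f b)) :
    pullGroup dot f = S := by
  apply Group.ext
  funext a b
  show (pullGroup dot f).mul a b = S.mul a b
  rw [pull_mul, ← hf, Equiv.symm_apply_apply]

/-- transport of the skew brace condition along an equiv -/
theorem brace_transport {G N : Type*} (circ : Group G) (dot : Group N) (f : G ≃ N) :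
    IsSkewBrace (pullGroup dot f) circ ↔ IsSkewBrace dot (pullGroup circ f.symm) := by
  constructor
  · intro h σ τ κ
    have := h (f.symm σ) (f.symm τ) (f.symm κ)
    apply_fun f at this
    simpa [pull_mul, pull_inv] using this
  · intro h σ τ κ
    have := h (f σ) (f τ) (f κ)
    apply_fun f.symm at this
    simpa [pull_mul, pull_inv] using this

/-- main counting lemma: `|Aut(N,·)| · #{S on G with P S and S ≅ dot}` equals the
number of equivs `f : G ≃ N` such that the pullback of `dot` along `f` satisfies `P`. -/
theorem count {G N : Type*} (dot : Group N) (P : Group G → Prop) :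
    Nat.card {f : N ≃ N // ∀ a b : N, f (dot.mul a b) = dot.mul (f a) (f b)} *
      Nat.card {S : Group G // P S ∧
        ∃ f : G ≃ N, ∀ a b : G, f (S.mul a b) = dot.mul (f a) (f b)} =
    Nat.card {f : G ≃ N // P (pullGroup dot f)} := by
  set E := {S : Group G // P S ∧
      ∃ f : G ≃ N, ∀ a b : G, f (S.mul a b) = dot.mul (f a) (f b)} with hE
  set A := {f : N ≃ N // ∀ a b : N, f (dot.mul a b) = dot.mul (f a) (f b)} with hA
  have f₀ : ∀ s : E, {f : G ≃ N // ∀ a b : G, f (s.1.mul a b) = dot.mul (f a) (f b)} :=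
    fun s => ⟨s.2.2.choose, s.2.2.choose_spec⟩
  have key : ∀ (s : E) (g : A), pullGroup dot ((f₀ s).1.trans g.1) = s.1 := by
    intro s g
    apply pull_eq
    intro a b
    simp [Equiv.trans_apply, (f₀ s).2, g.2]
  have mem : ∀ fh : {f : G ≃ N // P (pullGroup dot f)},
      P (pullGroup dot fh.1) ∧
        ∃ g : G ≃ N, ∀ a b : G,
          g ((pullGroup dot fh.1).mul a b) = dot.mul (g a) (g b) :=
    fun fh => ⟨fh.2, fh.1, fun a b => by rw [pull_mul, Equiv.apply_symm_apply]⟩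
  let eqv : E × A ≃ {f : G ≃ N // P (pullGroup dot f)} :=
    { toFun := fun p => ⟨(f₀ p.1).1.trans p.2.1, by rw [key p.1 p.2]; exact p.1.2.1⟩
      invFun := fun fh =>
        (⟨pullGroup dot fh.1, mem fh⟩,
         ⟨(f₀ ⟨pullGroup dot fh.1, mem fh⟩).1.symm.trans fh.1, by
            intro a b
            simp only [Equiv.trans_apply]
            rw [iso_symm (f₀ ⟨pullGroup dot fh.1, mem fh⟩).2, pull_mul,
              Equiv.apply_symm_apply]⟩)
      left_inv := by
        rintro ⟨s, g⟩
        have h1 : (⟨pullGroup dot ((f₀ s).1.trans g.1),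
            mem ⟨(f₀ s).1.trans g.1, by rw [key s g]; exact s.2.1⟩⟩ : E) = s :=
          Subtype.ext (key s g)
        have gen : ∀ t : E, t = s →
            ((f₀ t).1.symm.trans ((f₀ s).1.trans g.1) : N ≃ N) = g.1 := by
          rintro t rfl
          ext x
          simp
        exact Prod.ext h1 (Subtype.ext (gen _ h1))
      right_inv := by
        rintro ⟨f, hf⟩
        apply Subtype.ext
        show ((f₀ _).1.trans ((f₀ _).1.symm.trans f) : G ≃ N) = f
        ext x
        simp }
  rw [← Nat.card_congr eqv, Nat.card_prod, mul_comm]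

end Byott

/-- Byott's translation: for finite groups `(G,∘)` and `(N,·)` of the
same order, `|Aut(N,·)| · e(G,N) = |Aut(G,∘)| · f(G,N)`. -/
theorem stmt4 {G N : Type*} [Finite G] [Finite N]
    (circ : Group G) (dot : Group N) (hcard : Nat.card G = Nat.card N) :
    Nat.card {f : N ≃ N // ∀ a b : N, f (dot.mul a b) = dot.mul (f a) (f b)} *
      Nat.card {star : Group G // IsSkewBrace star circ ∧
        ∃ f : G ≃ N, ∀ a b : G, f (star.mul a b) = dot.mul (f a) (f b)} =
    Nat.card {f : G ≃ G // ∀ a b : G, f (circ.mul a b) = circ.mul (f a) (f b)} *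
      Nat.card {circ' : Group N // IsSkewBrace dot circ' ∧
        ∃ f : N ≃ G, ∀ a b : N, f (circ'.mul a b) = circ.mul (f a) (f b)} := by
  rw [Byott.count dot (fun S => IsSkewBrace S circ),
      Byott.count circ (fun C => IsSkewBrace dot C)]
  apply Nat.card_congr
  exact
    { toFun := fun fh => ⟨fh.1.symm, (Byott.brace_transport circ dot fh.1).mp fh.2⟩
      invFun := fun gh => ⟨gh.1.symm, by
        have := (Byott.brace_transport circ dot gh.1.symm).mpr
        rw [Equiv.symm_symm] at this
        exact this gh.2⟩
      left_inv := fun fh => by simp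
      right_inv := fun gh => by simp }
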